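/- Let m, n be positive integers and δ = [c_1,…,c_r|d_1,…,d_r] ∈ Δ(m,n). For every 1 ≤ i ≤ t there exists an integer N_i with 1 ≤ N_i ≤ r such that: (1) whenever [e_1,…,e_s|f_1,…,f_s] ∈ Δ(m,n) satisfies [e_1,…,e_s|f_1,…,f_s] ≥ δ and [e_1,…,e_s|f_1,…,f_s] ≱ τ_i, then s ≥ N_i; and (2) for every s with N_i ≤ s ≤ r, the minor [c_1,…,c_s|d_1,…,d_s] satisfies [c_1,…,c_s|d_1,…,d_s] ≥ δ and [c_1,…,c_s|d_1,…,d_s] ≱ τ_i. -/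

import Mathlib

open scoped BigOperators TensorProduct

set_option maxHeartbeats 1000000
set_option synthInstance.maxHeartbeats 400000

noncomputable section

/-- The trace ideal of an `R`-module `M`: the sum of the images of all
`R`-linear maps `M → R`. -/
def traceIdeal (R : Type*) [CommRing R] (M : Type*) [AddCommGroup M] [Module R M] :
    Ideal R :=
  ⨆ f : M →ₗ[R] R, LinearMap.range f

/-- `Γ(m,N)`: strictly increasing `m`-tuples with entries in `{1,…,N}`,
encoded as functions `Fin m → ℕ` and ordered componentwise. -/
def GammaSet (m N : ℕ) : Set (Fin m → ℕ) :=
  {a | StrictMono a ∧ ∀ i, 1 ≤ a i ∧ a i ≤ N}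

/-- Extended entries of a tuple `a ∈ Γ(m,N)`: `aext j = a_j` for `1 ≤ j ≤ m`
(1-based indexing) and `aext (m+1) = N+1`. -/
def aext (m N : ℕ) (a : Fin m → ℕ) (j : ℕ) : ℕ :=
  if h : j - 1 < m then a ⟨j - 1, h⟩ else N + 1

/-- Block data for `γ ∈ Γ(m,N)`: `k 0 = 0`, `k` is strictly increasing on
`{0,…,t+1}` and `k 1 < ⋯ < k (t+1)` lists exactly the indices `j ∈ {1,…,m}`
with `a_{j+1} - a_j > 1` (where `a_{m+1} = N+1`). -/
def IsBlockData (m N : ℕ) (a : Fin m → ℕ) (t : ℕ) (k : ℕ → ℕ) : Prop :=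
  k 0 = 0 ∧ (∀ i j, i < j → j ≤ t + 1 → k i < k j) ∧
    ∀ j, (∃ i, 1 ≤ i ∧ i ≤ t + 1 ∧ k i = j) ↔
      (1 ≤ j ∧ j ≤ m ∧ 1 < aext m N a (j + 1) - aext m N a j)

/-- `ζ_i`: the tuple `γ` with the entry `a_{k(i+1)}` replaced by `a_{k(i+1)} + 1`. -/
def zetaT (m : ℕ) (a : Fin m → ℕ) (k : ℕ → ℕ) (i : ℕ) : Fin m → ℕ :=
  fun j => if (j : ℕ) + 1 = k (i + 1) then a j + 1 else a j

/-- `σ_i`: the strictly increasing tuple whose entry set is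
`({a_1,…,a_m} ∖ {a_{k(i)}}) ∪ {a_{k(i+1)} + 1}`. -/
def sigmaT (m N : ℕ) (a : Fin m → ℕ) (k : ℕ → ℕ) (i : ℕ) : Fin m → ℕ :=
  fun j =>
    if (j : ℕ) + 1 < k i then a j
    else if (j : ℕ) + 1 < k (i + 1) then aext m N a ((j : ℕ) + 2)
    else if (j : ℕ) + 1 = k (i + 1) then a j + 1
    else a j

/-- `κ_i = Σ_{j=0}^{i} (k(j+1) − k(j)) + Σ_{j=i}^{t} (a_{k(j+1)+1} − a_{k(j+1)} − 1)`. -/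
def kappaT (m N : ℕ) (a : Fin m → ℕ) (t : ℕ) (k : ℕ → ℕ) (i : ℕ) : ℕ :=
  (∑ j ∈ Finset.range (i + 1), (k (j + 1) - k j)) +
    ∑ j ∈ Finset.Icc i t, (aext m N a (k (j + 1) + 1) - aext m N a (k (j + 1)) - 1)

/-- `κ = max_{0 ≤ i ≤ t} κ_i`. -/
def kappaMax (m N : ℕ) (a : Fin m → ℕ) (t : ℕ) (k : ℕ → ℕ) : ℕ :=
  (Finset.range (t + 1)).sup (kappaT m N a t k)

/-- `κ' = min_{0 ≤ i ≤ t} κ_i`. -/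
def kappaMin (m N : ℕ) (a : Fin m → ℕ) (t : ℕ) (k : ℕ → ℕ) : ℕ :=
  (Finset.range (t + 1)).inf' (Finset.nonempty_range_iff.mpr (Nat.succ_ne_zero t))
    (kappaT m N a t k)

/-- `i ∈ S_h`, i.e. `κ − κ_i ≥ h`. -/
def memS (m N : ℕ) (a : Fin m → ℕ) (t : ℕ) (k : ℕ → ℕ) (h i : ℕ) : Prop :=
  h ≤ kappaMax m N a t k - kappaT m N a t k i

/-- `i ∈ U_h`: `1 ≤ i ≤ t` and exactly one of `i-1`, `i` belongs to `S_h`. -/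
def memU (m N : ℕ) (a : Fin m → ℕ) (t : ℕ) (k : ℕ → ℕ) (h i : ℕ) : Prop :=
  1 ≤ i ∧ i ≤ t ∧ ¬ (memS m N a t k h i ↔ memS m N a t k h (i - 1))

/-- The maximal minor `[a]` of the generic `m × n` matrix `(X_{uv})`
(rows `1,…,m`, columns `a_1,…,a_m`), inside `B[X_{ij} : i,j ≥ 1]`. -/
def minor (B : Type*) [CommRing B] (m : ℕ) (a : Fin m → ℕ) : MvPolynomial (ℕ × ℕ) B :=
  (Matrix.of fun u v : Fin m => MvPolynomial.X ((u : ℕ) + 1, a v)).det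

/-- `G_B(X)`: the `B`-subalgebra generated by all maximal minors `[a]`, `a ∈ Γ(m,n)`. -/
def schubertAlgebra (B : Type*) [CommRing B] (m n : ℕ) :
    Subalgebra B (MvPolynomial (ℕ × ℕ) B) :=
  Algebra.adjoin B ((fun a => minor B m a) '' GammaSet m n)

lemma minor_mem (B : Type*) [CommRing B] (m n : ℕ) {a : Fin m → ℕ}
    (ha : a ∈ GammaSet m n) : minor B m a ∈ schubertAlgebra B m n :=
  Algebra.subset_adjoin ⟨a, ha, rfl⟩

/-- `J_B(X; γ)`: the ideal of `G_B(X)` generated by all `[δ]` with `δ ≱ γ`. -/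
def JIdeal (B : Type*) [CommRing B] (m n : ℕ) (γ : Fin m → ℕ) :
    Ideal (schubertAlgebra B m n) :=
  Ideal.span {x | ∃ a ∈ GammaSet m n, ¬ γ ≤ a ∧
    (x : MvPolynomial (ℕ × ℕ) B) = minor B m a}

/-- The Schubert cycle `G_B(X; γ) = G_B(X)/J_B(X;γ)`. -/
abbrev SchubertCycle (B : Type*) [CommRing B] (m n : ℕ) (γ : Fin m → ℕ) :=
  schubertAlgebra B m n ⧸ JIdeal B m n γ

/-- `J_B(x; δ) = J_B(X;δ)/J_B(X;γ)`, an ideal of `G_B(X;γ)`. -/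
def JxIdeal (B : Type*) [CommRing B] (m n : ℕ) (γ δ : Fin m → ℕ) :
    Ideal (SchubertCycle B m n γ) :=
  (JIdeal B m n δ).map (Ideal.Quotient.mk (JIdeal B m n γ))

end
noncomputable section
/-- An element of (the ambient type of) `Δ(m,n)`: a size `r` together with row
and column index tuples. -/
abbrev DeltaTuple : Type := Σ r : ℕ, (Fin r → ℕ) × (Fin r → ℕ)

/-- `Δ(m,n)`: the minors `[a_1,…,a_r | b_1,…,b_r]` with
`1 ≤ r ≤ min m n`, `1 ≤ a_1 < ⋯ < a_r ≤ m` and `1 ≤ b_1 < ⋯ < b_r ≤ n`. -/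
def DeltaSet (m n : ℕ) : Set DeltaTuple :=
  {x | 1 ≤ x.1 ∧ x.1 ≤ min m n ∧ StrictMono x.2.1 ∧ StrictMono x.2.2 ∧
    (∀ i, 1 ≤ x.2.1 i ∧ x.2.1 i ≤ m) ∧ (∀ i, 1 ≤ x.2.2 i ∧ x.2.2 i ≤ n)}

/-- The partial order on `Δ(m,n)`: `x ≤ y` iff `y.r ≤ x.r` and the first `y.r`
rows/columns of `x` are componentwise `≤` those of `y`. -/
def deltaLE (x y : DeltaTuple) : Prop :=
  ∃ h : y.1 ≤ x.1, ∀ i : Fin y.1,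
    x.2.1 (Fin.castLE h i) ≤ y.2.1 i ∧ x.2.2 (Fin.castLE h i) ≤ y.2.2 i

/-- The `r`-minor `det (X_{a_u, b_v})` of the generic `m × n` matrix, inside
the polynomial ring `B[X_{ij} : 1 ≤ i ≤ m, 1 ≤ j ≤ n]` (variables indexed by
`Fin m × Fin n`, with 1-based row/column labels). -/
def dminor (B : Type*) [CommRing B] (m n : ℕ) (x : DeltaTuple) :
    MvPolynomial (Fin m × Fin n) B :=
  (Matrix.of fun u v : Fin x.1 =>
    if h : x.2.1 u - 1 < m ∧ x.2.2 v - 1 < n then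
      MvPolynomial.X (⟨x.2.1 u - 1, h.1⟩, ⟨x.2.2 v - 1, h.2⟩)
    else 0).det

/-- `I_B(X;δ)`: the ideal of `B[X]` generated by all minors `θ ∈ Δ(m,n)` with `θ ≱ δ`. -/
def IIdeal (B : Type*) [CommRing B] (m n : ℕ) (δ : DeltaTuple) :
    Ideal (MvPolynomial (Fin m × Fin n) B) :=
  Ideal.span {p | ∃ θ ∈ DeltaSet m n, ¬ deltaLE δ θ ∧ p = dminor B m n θ}

/-- The determinantal ring `R_B(X;δ) = B[X]/I_B(X;δ)`. -/
abbrev DetRing (B : Type*) [CommRing B] (m n : ℕ) (δ : DeltaTuple) :=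
  MvPolynomial (Fin m × Fin n) B ⧸ IIdeal B m n δ

/-- `I_B(x;γ) = I_B(X;γ)/I_B(X;δ)`, an ideal of `R_B(X;δ)`. -/
def IxIdeal (B : Type*) [CommRing B] (m n : ℕ) (δ γ : DeltaTuple) :
    Ideal (DetRing B m n δ) :=
  (IIdeal B m n γ).map (Ideal.Quotient.mk (IIdeal B m n δ))

/-- The correspondence `δ = [c|d] ↦ δ̃ ∈ Γ(m, m+n)`:
`δ̃ = (d_1,…,d_r, m+n+1−e_{m−r},…,m+n+1−e_1)` where `e_1 < ⋯ < e_{m−r}`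
enumerate `{1,…,m} ∖ {c_1,…,c_r}`. -/
def tildeT (m n : ℕ) (x : DeltaTuple) : Fin m → ℕ := fun j =>
  if h : (j : ℕ) < x.1 then x.2.2 ⟨j, h⟩
  else m + n + 1 -
    ((Finset.Icc 1 m \ Finset.image x.2.1 Finset.univ).sort (· ≤ ·)).getD
      (m - 1 - (j : ℕ)) 0

/-- The inverse correspondence `φ : Γ(m,m+n) ∖ {(n+1,…,n+m)} → Δ(m,n)`:
`φ(b) = [a_1,…,a_s | b_1,…,b_s]` where `s = #{j : b_j ≤ n}` and `a_1 < ⋯ < a_s`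
enumerate `{1,…,m} ∖ {m+n+1−b_j : b_j > n}`. -/
def phiT (m n : ℕ) (b : Fin m → ℕ) : DeltaTuple :=
  ⟨((Finset.univ.filter fun j : Fin m => b j ≤ n).image fun j => b j).card,
   fun i => ((Finset.Icc 1 m \
      ((Finset.univ.filter fun j : Fin m => n < b j).image fun j => m + n + 1 - b j)).sort
        (· ≤ ·)).getD i 0,
   fun i => (((Finset.univ.filter fun j : Fin m => b j ≤ n).image fun j => b j).sort
        (· ≤ ·)).getD i 0⟩

end

section StatementNineAux

private lemma listSum_fin {l : List ℕ} {s : ℕ} (h : l.length = s) :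
    ∑ p : Fin s, l.getD p 0 = l.sum := by
  subst h
  calc ∑ p : Fin l.length, l.getD p 0
      = ∑ p : Fin l.length, l[(p : ℕ)] :=
        Finset.sum_congr rfl fun p _ => List.getD_eq_getElem l 0 p.isLt
    _ = (List.ofFn fun p : Fin l.length => l[(p : ℕ)]).sum := List.sum_ofFn.symm
    _ = l.sum := by rw [List.ofFn_getElem]

private lemma sortSum {A : Finset ℕ} {s : ℕ} (h : A.card = s) :
    ∑ p : Fin s, (A.sort (· ≤ ·)).getD p 0 = ∑ x ∈ A, x := by
  rw [listSum_fin (by rw [Finset.length_sort, h])]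
  rw [(Finset.sort_perm_toList A (· ≤ ·)).sum_eq]
  rw [← List.map_id A.toList, Finset.sum_map_toList]
  simp

private lemma filter_val_lt_eq {m r : ℕ} (h : r ≤ m) :
    (Finset.univ.filter fun j : Fin m => (j : ℕ) < r)
      = (Finset.univ : Finset (Fin r)).map
          ⟨Fin.castLE h, fun a b hab => by
            have h2 : (a : ℕ) = (b : ℕ) := congrArg (fun x : Fin m => (x : ℕ)) hab
            exact Fin.ext h2⟩ := by
  ext j
  simp only [Finset.mem_filter, Finset.mem_univ, true_and, Finset.mem_map,
    Function.Embedding.coeFn_mk]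
  constructor
  · intro hj; exact ⟨⟨j, hj⟩, Fin.ext rfl⟩
  · rintro ⟨i, rfl⟩; exact i.isLt

private lemma strictMono_of_adj {m : ℕ} {f : Fin m → ℕ}
    (h : ∀ j : ℕ, ∀ h1 : j < m, ∀ h2 : j + 1 < m, f ⟨j, h1⟩ < f ⟨j + 1, h2⟩) :
    StrictMono f := by
  have key : ∀ e a : ℕ, ∀ h1 : a < m, ∀ h2 : a + e + 1 < m,
      f ⟨a, h1⟩ < f ⟨a + e + 1, h2⟩ := by
    intro e
    induction e with
    | zero => intro a h1 h2; exact h a h1 h2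
    | succ e ih =>
        intro a h1 h2
        exact lt_trans (ih a h1 (by omega)) (by
          have := h (a + e + 1) (by omega) (by omega)
          convert this using 3 <;> rfl)
  intro a b hab
  obtain ⟨a, ha⟩ := a; obtain ⟨b, hb⟩ := b
  have hab' : a < b := hab
  have hb' : b = a + (b - a - 1) + 1 := by omega
  have := key (b - a - 1) a ha (by omega)
  convert this using 3 <;> rfl

/-- The key combinatorial fact: if `σ'` dominates `tildeT δ` strictly in at
least one spot, then `δ` does not dominate `φ(σ')` in `Δ(m,n)`. -/
private lemma key_not_deltaLE {m n : ℕ} (δ : DeltaTuple) (hδ : δ ∈ DeltaSet m n)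
    (σ' : Fin m → ℕ) (hσmono : StrictMono σ')
    (hσub : ∀ j, σ' j ≤ m + n)
    (hge : ∀ j, tildeT m n δ j ≤ σ' j)
    (hne : ∃ j, tildeT m n δ j < σ' j) :
    ¬ deltaLE (phiT m n σ') δ := by
  obtain ⟨r, c, d⟩ := δ
  obtain ⟨hr1, hrmn, hc, hd, hcb, hdb⟩ := hδ
  replace hr1 : 1 ≤ r := hr1
  replace hrmn : r ≤ min m n := hrmn
  replace hc : StrictMono c := hc
  replace hd : StrictMono d := hd
  replace hcb : ∀ i : Fin r, 1 ≤ c i ∧ c i ≤ m := hcb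
  replace hdb : ∀ i : Fin r, 1 ≤ d i ∧ d i ≤ n := hdb
  set b : Fin m → ℕ := tildeT m n ⟨r, c, d⟩ with hbdef
  have hrm : r ≤ m := le_trans hrmn (min_le_left _ _)
  have hrn : r ≤ n := le_trans hrmn (min_le_right _ _)
  set C : Finset ℕ := Finset.image c Finset.univ with hCdef
  set E : Finset ℕ := Finset.Icc 1 m \ C with hEdef
  have hCsub : C ⊆ Finset.Icc 1 m := by
    intro x hx
    rw [hCdef, Finset.mem_image] at hx
    obtain ⟨i, _, rfl⟩ := hx
    exact Finset.mem_Icc.mpr ⟨(hcb i).1, (hcb i).2⟩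
  have hCcard : C.card = r := by
    rw [hCdef, Finset.card_image_of_injective _ hc.injective, Finset.card_univ,
      Fintype.card_fin]
  have hEcard : E.card = m - r := by
    rw [hEdef, Finset.card_sdiff_of_subset hCsub, Nat.card_Icc, hCcard]
    omega
  set eL : List ℕ := E.sort (· ≤ ·) with heL
  have hlen : eL.length = m - r := by rw [heL, Finset.length_sort, hEcard]
  have hEmem : ∀ x ∈ E, 1 ≤ x ∧ x ≤ m := by
    intro x hx
    rw [hEdef, Finset.mem_sdiff, Finset.mem_Icc] at hx
    exact hx.1
  have hbsmall : ∀ (j : Fin m) (h : (j : ℕ) < r), b j = d ⟨j, h⟩ := by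
    intro j h; rw [hbdef]; exact dif_pos h
  have hbig : ∀ j : Fin m, r ≤ (j : ℕ) → ∃ x ∈ E, b j = m + n + 1 - x := by
    intro j hj
    have hjlt := j.isLt
    have hq : m - 1 - (j : ℕ) < eL.length := by rw [hlen]; omega
    have hb1 : b j = m + n + 1 - eL.getD (m - 1 - (j : ℕ)) 0 := by
      rw [hbdef]; exact dif_neg (show ¬ (j : ℕ) < r by omega)
    rw [List.getD_eq_getElem eL 0 hq] at hb1
    exact ⟨eL[m - 1 - (j : ℕ)], (Finset.mem_sort _).1 (List.getElem_mem _), hb1⟩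
  have hbsm : ∀ j : Fin m, b j ≤ n ↔ (j : ℕ) < r := by
    intro j
    constructor
    · intro h
      by_contra hge'
      obtain ⟨x, hx, hbx⟩ := hbig j (by omega)
      have := hEmem x hx
      omega
    · intro h
      rw [hbsmall j h]
      exact (hdb _).2
  have hble : ∀ j, b j ≤ m + n := by
    intro j
    by_cases h : (j : ℕ) < r
    · rw [hbsmall j h]; exact le_trans (hdb _).2 (Nat.le_add_left _ _)
    · obtain ⟨x, hx, hbx⟩ := hbig j (by omega)
      have := hEmem x hx
      omega
  -- b is strictly monotone
  have hbigval : ∀ j : Fin m, r ≤ (j : ℕ) →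
      ∃ hq : m - 1 - (j : ℕ) < eL.length, b j = m + n + 1 - eL[m - 1 - (j : ℕ)] := by
    intro j hj
    have hjlt := j.isLt
    have hq : m - 1 - (j : ℕ) < eL.length := by rw [hlen]; omega
    have hb1 : b j = m + n + 1 - eL.getD (m - 1 - (j : ℕ)) 0 := by
      rw [hbdef]; exact dif_neg (show ¬ (j : ℕ) < r by omega)
    rw [List.getD_eq_getElem eL 0 hq] at hb1
    exact ⟨hq, hb1⟩
  have hbmono : StrictMono b := by
    intro j1 j2 h12
    by_cases h1 : (j1 : ℕ) < r
    · by_cases h2 : (j2 : ℕ) < r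
      · rw [hbsmall j1 h1, hbsmall j2 h2]
        exact hd (show ((⟨(j1 : ℕ), h1⟩ : Fin r)) < ⟨(j2 : ℕ), h2⟩ from h12)
      · have hs1 : b j1 ≤ n := (hbsm j1).2 h1
        obtain ⟨x, hx, hbx⟩ := hbig j2 (by omega)
        have := hEmem x hx
        omega
    · have h2 : ¬ (j2 : ℕ) < r := by
        have : (j1 : ℕ) < (j2 : ℕ) := h12
        omega
      obtain ⟨hq1, hb1⟩ := hbigval j1 (by omega)
      obtain ⟨hq2, hb2⟩ := hbigval j2 (by omega)
      have hsorted : List.Pairwise (· < ·) eL := (Finset.sortedLT_sort E).pairwise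
      have hlt : eL[m - 1 - (j2 : ℕ)] < eL[m - 1 - (j1 : ℕ)] := by
        apply List.pairwise_iff_get.1 hsorted ⟨_, hq2⟩ ⟨_, hq1⟩
        have h3 : (j1 : ℕ) < (j2 : ℕ) := h12
        have := j2.isLt
        simp only [Fin.lt_def]
        omega
      have hg1 := hEmem _ ((Finset.mem_sort _).1 (List.getElem_mem hq1))
      have hg2 := hEmem _ ((Finset.mem_sort _).1 (List.getElem_mem hq2))
      omega
  -- the big image of b is exactly E
  have hbiginjOn : ∀ x ∈ Finset.univ.filter fun j : Fin m => r ≤ (j : ℕ),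
      ∀ y ∈ Finset.univ.filter fun j : Fin m => r ≤ (j : ℕ),
      m + n + 1 - b x = m + n + 1 - b y → x = y := by
    intro x _ y _ hxy
    apply hbmono.injective
    have h1 := hble x; have h2 := hble y
    omega
  have hEbig : (Finset.univ.filter fun j : Fin m => r ≤ (j : ℕ)).image
      (fun j => m + n + 1 - b j) = E := by
    apply Finset.eq_of_subset_of_card_le
    · intro x hx
      simp only [Finset.mem_image, Finset.mem_filter, Finset.mem_univ, true_and] at hx
      obtain ⟨j, hj, rfl⟩ := hx
      obtain ⟨y, hy, hbj⟩ := hbig j hj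
      have hym := hEmem y hy
      have : m + n + 1 - b j = y := by omega
      rwa [this]
    · rw [Finset.card_image_of_injOn hbiginjOn, hEcard]
      have hc1 := Finset.card_filter_add_card_filter_not
        (s := (Finset.univ : Finset (Fin m))) (p := fun j : Fin m => (j : ℕ) < r)
      have hcongr : (Finset.univ.filter fun j : Fin m => ¬ (j : ℕ) < r)
          = Finset.univ.filter fun j : Fin m => r ≤ (j : ℕ) := by
        apply Finset.filter_congr; intro j _; simp [not_lt]
      rw [hcongr] at hc1
      have hTc : (Finset.univ.filter fun j : Fin m => (j : ℕ) < r).card = r := by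
        rw [filter_val_lt_eq hrm, Finset.card_map, Finset.card_univ, Fintype.card_fin]
      have hu : (Finset.univ : Finset (Fin m)).card = m := by
        rw [Finset.card_univ, Fintype.card_fin]
      omega
  -- now suppose deltaLE (phiT σ') δ
  rintro ⟨hsz, hcomp⟩
  have hσinj := hσmono.injective
  -- sizes
  set Fsmσ : Finset (Fin m) := Finset.univ.filter fun j : Fin m => σ' j ≤ n with hFsmσ
  set T : Finset (Fin m) := Finset.univ.filter fun j : Fin m => (j : ℕ) < r with hT
  have hTcard : T.card = r := by
    rw [hT, filter_val_lt_eq hrm, Finset.card_map, Finset.card_univ, Fintype.card_fin]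
  have hsub : Fsmσ ⊆ T := by
    intro j hj
    rw [hFsmσ, Finset.mem_filter] at hj
    rw [hT, Finset.mem_filter]
    exact ⟨Finset.mem_univ _, (hbsm j).1 (le_trans (hge j) hj.2)⟩
  have hs'def : (phiT m n σ').1 = (Fsmσ.image fun j => σ' j).card := rfl
  have himgcard : (Fsmσ.image fun j => σ' j).card = Fsmσ.card :=
    Finset.card_image_of_injective _ hσinj
  have hs'r : (phiT m n σ').1 = r := by
    have h1 : (phiT m n σ').1 ≤ r := by
      rw [hs'def, himgcard]
      exact le_trans (Finset.card_le_card hsub) (le_of_eq hTcard)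
    exact le_antisymm h1 hsz
  have hseteq : Fsmσ = T := by
    apply Finset.eq_of_subset_of_card_le hsub
    rw [hTcard, ← himgcard, ← hs'def, hs'r]
  -- reindexing sums over Fin r through castLE
  have hbij : Function.Bijective (Fin.castLE hsz : Fin r → Fin (phiT m n σ').1) := by
    rw [Fintype.bijective_iff_injective_and_card]
    constructor
    · intro a b hab
      exact Fin.ext (congrArg (fun x : Fin (phiT m n σ').1 => (x : ℕ)) hab)
    · simp [hs'r]
  have hsum_reidx : ∀ F : Fin (phiT m n σ').1 → ℕ,
      ∑ i : Fin r, F (Fin.castLE hsz i) = ∑ p, F p := by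
    intro F
    exact Fintype.sum_bijective _ hbij _ _ (fun i => rfl)
  -- column comparison
  have hcolsum : ∑ i : Fin r, (phiT m n σ').2.2 (Fin.castLE hsz i) ≤ ∑ i : Fin r, d i :=
    Finset.sum_le_sum fun i _ => (hcomp i).2
  have hcolval : ∑ p : Fin (phiT m n σ').1, (phiT m n σ').2.2 p
      = ∑ j ∈ Fsmσ, σ' j := by
    have h1 : ∑ p : Fin (phiT m n σ').1, (phiT m n σ').2.2 p
        = ∑ x ∈ Fsmσ.image (fun j => σ' j), x := sortSum rfl
    rw [h1]
    exact Finset.sum_image fun x _ y _ hxy => hσinj hxy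
  have hdval : ∑ i : Fin r, d i = ∑ j ∈ T, b j := by
    rw [hT, filter_val_lt_eq hrm, Finset.sum_map]
    apply Finset.sum_congr rfl
    intro i _
    change d i = b (Fin.castLE hrm i)
    rw [hbsmall (Fin.castLE hrm i) i.isLt]
    exact congrArg d (Fin.ext rfl)
  have hsmalls_le : ∑ j ∈ T, σ' j ≤ ∑ j ∈ T, b j := by
    calc ∑ j ∈ T, σ' j = ∑ j ∈ Fsmσ, σ' j := by rw [hseteq]
      _ = ∑ p : Fin (phiT m n σ').1, (phiT m n σ').2.2 p := hcolval.symm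
      _ = ∑ i : Fin r, (phiT m n σ').2.2 (Fin.castLE hsz i) := (hsum_reidx _).symm
      _ ≤ ∑ i : Fin r, d i := hcolsum
      _ = ∑ j ∈ T, b j := hdval
  have hsmalls_eq : ∀ j ∈ T, b j = σ' j := by
    have hle2 : ∑ j ∈ T, b j ≤ ∑ j ∈ T, σ' j := Finset.sum_le_sum fun j _ => hge j
    exact (Finset.sum_eq_sum_iff_of_le fun j _ => hge j).1
      (le_antisymm hle2 hsmalls_le)
  -- row comparison
  set Fbigσ : Finset (Fin m) := Finset.univ.filter fun j : Fin m => n < σ' j with hFbigσ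
  set Fbigb : Finset (Fin m) := Finset.univ.filter fun j : Fin m => r ≤ (j : ℕ) with hFbigb
  have hbigeq : Fbigσ = Fbigb := by
    ext j
    have h1 : σ' j ≤ n ↔ (j : ℕ) < r := by
      constructor
      · intro h
        have : j ∈ Fsmσ := by rw [hFsmσ, Finset.mem_filter]; exact ⟨Finset.mem_univ _, h⟩
        rw [hseteq, hT, Finset.mem_filter] at this
        exact this.2
      · intro h
        have : j ∈ T := by rw [hT, Finset.mem_filter]; exact ⟨Finset.mem_univ _, h⟩
        rw [← hseteq, hFsmσ, Finset.mem_filter] at this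
        exact this.2
    rw [hFbigσ, hFbigb, Finset.mem_filter, Finset.mem_filter]
    constructor
    · rintro ⟨_, h⟩; exact ⟨Finset.mem_univ _, by omega⟩
    · rintro ⟨_, h⟩; exact ⟨Finset.mem_univ _, by omega⟩
  set Bimg : Finset ℕ := Fbigσ.image (fun j => m + n + 1 - σ' j) with hBimg
  have hBsub : Bimg ⊆ Finset.Icc 1 m := by
    intro x hx
    rw [hBimg, Finset.mem_image] at hx
    obtain ⟨j, hj, rfl⟩ := hx
    rw [hFbigσ, Finset.mem_filter] at hj
    have := hσub j
    rw [Finset.mem_Icc]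
    omega
  have hBinj : ∀ x ∈ Fbigσ, ∀ y ∈ Fbigσ, m + n + 1 - σ' x = m + n + 1 - σ' y → x = y := by
    intro x _ y _ hxy
    apply hσinj
    have hx := hσub x; have hy := hσub y
    omega
  have hBcard : Bimg.card = m - r := by
    rw [hBimg, Finset.card_image_of_injOn hBinj, hbigeq, hFbigb]
    have := Finset.card_filter_add_card_filter_not
      (s := (Finset.univ : Finset (Fin m))) (p := fun j : Fin m => (j : ℕ) < r)
    have hcongr : (Finset.univ.filter fun j : Fin m => ¬ (j : ℕ) < r)
        = Finset.univ.filter fun j : Fin m => r ≤ (j : ℕ) := by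
      apply Finset.filter_congr; intro j _; simp [not_lt]
    rw [hcongr] at this
    have hTc : (Finset.univ.filter fun j : Fin m => (j : ℕ) < r).card = r := hTcard
    have hu : (Finset.univ : Finset (Fin m)).card = m := by
      rw [Finset.card_univ, Fintype.card_fin]
    omega
  have hrowcard : (Finset.Icc 1 m \ Bimg).card = r := by
    rw [Finset.card_sdiff_of_subset hBsub, Nat.card_Icc, hBcard]
    omega
  have hrowsum : ∑ i : Fin r, (phiT m n σ').2.1 (Fin.castLE hsz i) ≤ ∑ i : Fin r, c i :=
    Finset.sum_le_sum fun i _ => (hcomp i).1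
  have hrowval : ∑ p : Fin (phiT m n σ').1, (phiT m n σ').2.1 p
      = ∑ x ∈ Finset.Icc 1 m \ Bimg, x := by
    exact sortSum (by rw [hrowcard, hs'r])
  have hCval : ∑ i : Fin r, c i = ∑ x ∈ C, x := by
    rw [hCdef]
    exact (Finset.sum_image (f := fun x : ℕ => x) (g := c)
      (fun x _ y _ hxy => hc.injective hxy)).symm
  have hEval : ∑ x ∈ E, x = ∑ j ∈ Fbigb, (m + n + 1 - b j) := by
    conv_lhs => rw [← hEbig]
    rw [hFbigb]
    exact Finset.sum_image hbiginjOn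
  have hIccsum1 : ∑ x ∈ Finset.Icc 1 m \ Bimg, x + ∑ x ∈ Bimg, x
      = ∑ x ∈ Finset.Icc 1 m, x := Finset.sum_sdiff hBsub
  have hIccsum2 : ∑ x ∈ E, x + ∑ x ∈ C, x = ∑ x ∈ Finset.Icc 1 m, x := by
    rw [hEdef]; exact Finset.sum_sdiff hCsub
  have hBval : ∑ x ∈ Bimg, x = ∑ j ∈ Fbigb, (m + n + 1 - σ' j) := by
    rw [hBimg, Finset.sum_image hBinj, hbigeq]
  have hbigs_le1 : ∑ j ∈ Fbigb, (m + n + 1 - σ' j) ≤ ∑ j ∈ Fbigb, (m + n + 1 - b j) :=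
    Finset.sum_le_sum fun j _ => Nat.sub_le_sub_left (hge j) _
  have hbigs_le2 : ∑ j ∈ Fbigb, (m + n + 1 - b j) ≤ ∑ j ∈ Fbigb, (m + n + 1 - σ' j) := by
    -- from row sums
    have h1 : ∑ x ∈ Finset.Icc 1 m \ Bimg, x ≤ ∑ x ∈ C, x := by
      calc ∑ x ∈ Finset.Icc 1 m \ Bimg, x
          = ∑ p : Fin (phiT m n σ').1, (phiT m n σ').2.1 p := hrowval.symm
        _ = ∑ i : Fin r, (phiT m n σ').2.1 (Fin.castLE hsz i) := (hsum_reidx _).symm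
        _ ≤ ∑ i : Fin r, c i := hrowsum
        _ = ∑ x ∈ C, x := hCval
    rw [← hEval, ← hBval]
    omega
  have hbigs_eq : ∀ j ∈ Fbigb, m + n + 1 - σ' j = m + n + 1 - b j := by
    exact (Finset.sum_eq_sum_iff_of_le fun j _ => Nat.sub_le_sub_left (hge j) _).1
      (le_antisymm hbigs_le1 hbigs_le2)
  -- conclude equality everywhere, contradiction
  obtain ⟨j0, hj0⟩ := hne
  by_cases hcase : (j0 : ℕ) < r
  · have : j0 ∈ T := by rw [hT, Finset.mem_filter]; exact ⟨Finset.mem_univ _, hcase⟩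
    have := hsmalls_eq j0 this
    omega
  · have hmem : j0 ∈ Fbigb := by
      rw [hFbigb, Finset.mem_filter]; exact ⟨Finset.mem_univ _, by omega⟩
    have heq := hbigs_eq j0 hmem
    have h1 := hble j0
    have h2 := hσub j0
    omega

end StatementNineAux

/-- For each `1 ≤ i ≤ t` there is `1 ≤ N_i ≤ r` such that
(1) every `θ = [e|f] ∈ Δ(m,n)` with `θ ≥ δ` and `θ ≱ τ_i` has size `≥ N_i`, and
(2) for every `N_i ≤ s ≤ r` the truncation `[c_1,…,c_s | d_1,…,d_s]` satisfies
`≥ δ` and `≱ τ_i`. -/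
theorem exists_size_bound_detRing {m n : ℕ} (hm : 0 < m) (hn : 0 < n)
    (δ : DeltaTuple) (hδ : δ ∈ DeltaSet m n)
    (t : ℕ) (k : ℕ → ℕ) (hbd : IsBlockData m (m + n) (tildeT m n δ) t k)
    (i : ℕ) (hi1 : 1 ≤ i) (hit : i ≤ t) :
    ∃ N, 1 ≤ N ∧ N ≤ δ.1 ∧
      (∀ θ ∈ DeltaSet m n, deltaLE δ θ →
        ¬ deltaLE (phiT m n (sigmaT m (m + n) (tildeT m n δ) k i)) θ → N ≤ θ.1) ∧
      (∀ s, N ≤ s → ∀ hs : s ≤ δ.1,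
        deltaLE δ
          ⟨s, fun j => δ.2.1 (Fin.castLE hs j), fun j => δ.2.2 (Fin.castLE hs j)⟩ ∧
        ¬ deltaLE (phiT m n (sigmaT m (m + n) (tildeT m n δ) k i))
          ⟨s, fun j => δ.2.1 (Fin.castLE hs j), fun j => δ.2.2 (Fin.castLE hs j)⟩) := by
  classical
  obtain ⟨hk0, hkmono, hkiff⟩ := hbd
  set b : Fin m → ℕ := tildeT m n δ with hbdef
  obtain ⟨hr1, hrmn, hc, hd, hcb, hdb⟩ := hδ
  have hrm : δ.1 ≤ m := le_trans hrmn (min_le_left _ _)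
  have hrn : δ.1 ≤ n := le_trans hrmn (min_le_right _ _)
  -- basic facts about b = tildeT δ
  set C : Finset ℕ := Finset.image δ.2.1 Finset.univ with hCdef
  set E : Finset ℕ := Finset.Icc 1 m \ C with hEdef
  have hCsub : C ⊆ Finset.Icc 1 m := by
    intro x hx
    rw [hCdef, Finset.mem_image] at hx
    obtain ⟨i, _, rfl⟩ := hx
    exact Finset.mem_Icc.mpr ⟨(hcb i).1, (hcb i).2⟩
  have hCcard : C.card = δ.1 := by
    rw [hCdef, Finset.card_image_of_injective _ hc.injective, Finset.card_univ,
      Fintype.card_fin]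
  have hEcard : E.card = m - δ.1 := by
    rw [hEdef, Finset.card_sdiff_of_subset hCsub, Nat.card_Icc, hCcard]
    omega
  set eL : List ℕ := E.sort (· ≤ ·) with heL
  have hlen : eL.length = m - δ.1 := by rw [heL, Finset.length_sort, hEcard]
  have hEmem : ∀ x ∈ E, 1 ≤ x ∧ x ≤ m := by
    intro x hx
    rw [hEdef, Finset.mem_sdiff, Finset.mem_Icc] at hx
    exact hx.1
  have hbsmall : ∀ (j : Fin m) (h : (j : ℕ) < δ.1), b j = δ.2.2 ⟨j, h⟩ := by
    intro j h; rw [hbdef]; exact dif_pos h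
  have hbbigval : ∀ j : Fin m, δ.1 ≤ (j : ℕ) →
      ∃ hq : m - 1 - (j : ℕ) < eL.length, b j = m + n + 1 - eL[m - 1 - (j : ℕ)] := by
    intro j hj
    have hjlt := j.isLt
    have hq : m - 1 - (j : ℕ) < eL.length := by rw [hlen]; omega
    have hb1 : b j = m + n + 1 - eL.getD (m - 1 - (j : ℕ)) 0 := by
      rw [hbdef]; exact dif_neg (show ¬ (j : ℕ) < δ.1 by omega)
    rw [List.getD_eq_getElem eL 0 hq] at hb1
    exact ⟨hq, hb1⟩
  have hgetmem : ∀ (q : ℕ) (hq : q < eL.length), 1 ≤ eL[q] ∧ eL[q] ≤ m := by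
    intro q hq
    exact hEmem _ ((Finset.mem_sort _).1 (List.getElem_mem _))
  have hbb : ∀ j : Fin m, 1 ≤ b j ∧ b j ≤ m + n := by
    intro j
    by_cases h : (j : ℕ) < δ.1
    · rw [hbsmall j h]
      exact ⟨(hdb _).1, le_trans (hdb _).2 (Nat.le_add_left _ _)⟩
    · obtain ⟨hq, hb1⟩ := hbbigval j (by omega)
      have := hgetmem _ hq
      omega
  have hbsm : ∀ j : Fin m, b j ≤ n ↔ (j : ℕ) < δ.1 := by
    intro j
    constructor
    · intro h
      by_contra hge'
      obtain ⟨hq, hb1⟩ := hbbigval j (by omega)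
      have := hgetmem _ hq
      omega
    · intro h
      rw [hbsmall j h]
      exact (hdb _).2
  have hbmono : StrictMono b := by
    intro j1 j2 h12
    by_cases h1 : (j1 : ℕ) < δ.1
    · by_cases h2 : (j2 : ℕ) < δ.1
      · rw [hbsmall j1 h1, hbsmall j2 h2]
        exact hd (by exact h12)
      · have hs1 : b j1 ≤ n := (hbsm j1).2 h1
        obtain ⟨hq, hb2⟩ := hbbigval j2 (by omega)
        have := hgetmem _ hq
        omega
    · have h2 : ¬ (j2 : ℕ) < δ.1 := by
        have : (j1 : ℕ) < (j2 : ℕ) := h12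
        omega
      obtain ⟨hq1, hb1⟩ := hbbigval j1 (by omega)
      obtain ⟨hq2, hb2⟩ := hbbigval j2 (by omega)
      have hsorted : List.Pairwise (· < ·) eL := (Finset.sortedLT_sort E).pairwise
      have hlt : eL[m - 1 - (j2 : ℕ)] < eL[m - 1 - (j1 : ℕ)] := by
        apply List.pairwise_iff_get.1 hsorted ⟨_, hq2⟩ ⟨_, hq1⟩
        have : (j1 : ℕ) < (j2 : ℕ) := h12
        have := j2.isLt
        simp only [Fin.lt_def]
        omega
      have hg1 := hgetmem _ hq1
      have hg2 := hgetmem _ hq2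
      omega
  -- block data facts
  have hK1 : 1 ≤ k i := by
    have := hkmono 0 i hi1 (by omega)
    omega
  have hKK' : k i < k (i + 1) := hkmono i (i + 1) (by omega) (by omega)
  obtain ⟨hK'1, hK'm, hgapv⟩ := (hkiff (k (i + 1))).1 ⟨i + 1, by omega, by omega, rfl⟩
  have haK' : aext m (m + n) b (k (i + 1)) = b ⟨k (i + 1) - 1, by omega⟩ := by
    rw [aext]; exact dif_pos (by omega)
  have hgap : ∀ hlt : k (i + 1) < m,
      b ⟨k (i + 1) - 1, by omega⟩ + 1 < b ⟨k (i + 1), hlt⟩ := by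
    intro hlt
    have h2 : aext m (m + n) b (k (i + 1) + 1) = b ⟨k (i + 1), hlt⟩ := by
      rw [aext]
      have : k (i + 1) + 1 - 1 = k (i + 1) := by omega
      simp only [this]
      exact dif_pos hlt
    rw [haK', h2] at hgapv
    omega
  have hgap2 : k (i + 1) = m → b ⟨k (i + 1) - 1, by omega⟩ + 1 ≤ m + n := by
    intro hm'
    have h2 : aext m (m + n) b (k (i + 1) + 1) = m + n + 1 := by
      rw [aext]
      exact dif_neg (by omega)
    rw [haK', h2] at hgapv
    omega
  -- facts about σ
  set σ : Fin m → ℕ := sigmaT m (m + n) b k i with hσdef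
  have hσval : ∀ j : Fin m, σ j =
      if (j : ℕ) + 1 < k i then b j
      else if (j : ℕ) + 1 < k (i + 1) then aext m (m + n) b ((j : ℕ) + 2)
      else if (j : ℕ) + 1 = k (i + 1) then b j + 1
      else b j := fun j => rfl
  have haext_mid : ∀ (j : Fin m) (hj : (j : ℕ) + 1 < k (i + 1)),
      aext m (m + n) b ((j : ℕ) + 2) = b ⟨(j : ℕ) + 1, by omega⟩ := by
    intro j hj
    rw [aext]
    have h1 : (j : ℕ) + 2 - 1 = (j : ℕ) + 1 := by omega
    simp only [h1]
    exact dif_pos (by omega)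
  have hσge : ∀ j, b j ≤ σ j := by
    intro j
    rw [hσval]
    split_ifs with h1 h2 h3
    · exact le_rfl
    · rw [haext_mid j h2]
      exact le_of_lt (hbmono (show j < ⟨(j : ℕ) + 1, by omega⟩ by
        simp only [Fin.lt_def]; omega))
    · omega
    · exact le_rfl
  have hσub : ∀ j, σ j ≤ m + n := by
    intro j
    rw [hσval]
    split_ifs with h1 h2 h3
    · exact (hbb j).2
    · rw [haext_mid j h2]
      exact (hbb _).2
    · -- j + 1 = k (i+1)
      have hjval : (j : ℕ) = k (i + 1) - 1 := by omega
      by_cases hlt : k (i + 1) < m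
      · have := hgap hlt
        have h4 := (hbb ⟨k (i + 1), hlt⟩).2
        have h5 : b j = b ⟨k (i + 1) - 1, by omega⟩ := by
          congr 1
          exact Fin.ext hjval
        omega
      · have hm' : k (i + 1) = m := by omega
        have := hgap2 hm'
        have h5 : b j = b ⟨k (i + 1) - 1, by omega⟩ := by
          congr 1
          exact Fin.ext hjval
        omega
    · exact (hbb j).2
  have hσne : ∃ j, b j < σ j := by
    have hjlt : k (i + 1) - 1 < m := by omega
    refine ⟨⟨k (i + 1) - 1, hjlt⟩, ?_⟩
    have hval : ((⟨k (i + 1) - 1, hjlt⟩ : Fin m) : ℕ) = k (i + 1) - 1 := rfl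
    rw [hσval]
    split_ifs with h1 h2 h3
    · omega
    · omega
    · omega
    · omega
  have hσmono : StrictMono σ := by
    apply strictMono_of_adj
    intro j hj1 hj2
    rw [hσval, hσval]
    simp only
    by_cases c1 : j + 1 + 1 < k i
    · -- both in first branch
      rw [if_pos (by omega : j + 1 < k i), if_pos c1]
      exact hbmono (show (⟨j, hj1⟩ : Fin m) < ⟨j + 1, hj2⟩ by
        simp only [Fin.lt_def]; omega)
    · by_cases c2 : j + 1 < k i
      · -- j+1 < k i ≤ j+2, so j+2 = k i < k (i+1)
        rw [if_pos c2, if_neg c1, if_pos (by omega : j + 1 + 1 < k (i + 1))]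
        rw [haext_mid ⟨j + 1, hj2⟩ (by simp; omega)]
        exact hbmono (show (⟨j, hj1⟩ : Fin m) < ⟨j + 1 + 1, by omega⟩ by
          simp only [Fin.lt_def]; omega)
      · by_cases c3 : j + 1 + 1 < k (i + 1)
        · -- both middle
          rw [if_neg c2, if_pos (by omega : j + 1 < k (i + 1)), if_neg (by omega), if_pos c3]
          rw [haext_mid ⟨j, hj1⟩ (by simp; omega), haext_mid ⟨j + 1, hj2⟩ (by simp; omega)]
          exact hbmono (show (⟨(j : ℕ) + 1, by omega⟩ : Fin m) < ⟨j + 1 + 1, by omega⟩ by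
            simp only [Fin.lt_def]; omega)
        · by_cases c4 : j + 1 + 1 = k (i + 1)
          · -- second is the bumped entry
            rw [if_neg c2, if_neg c1, if_neg c3, if_pos c4]
            by_cases c5 : j + 1 < k (i + 1)
            · rw [if_pos c5, haext_mid ⟨j, hj1⟩ c5]
              exact Nat.lt_succ_self _
            · -- j + 1 ≥ k (i+1) but j + 2 = k (i+1): impossible
              omega
          · -- j + 2 > k (i+1)
            by_cases c5 : j + 1 = k (i + 1)
            · -- first is bumped entry, second is plain; use the gap
              rw [if_neg c2, if_neg (by omega), if_pos c5, if_neg c1, if_neg c3, if_neg c4]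
              have hlt : k (i + 1) < m := by omega
              have := hgap hlt
              have e1 : b ⟨j, hj1⟩ = b ⟨k (i + 1) - 1, by omega⟩ := by
                congr 1; exact Fin.ext (show j = k (i + 1) - 1 by omega)
              have e2 : b ⟨j + 1, hj2⟩ = b ⟨k (i + 1), hlt⟩ := by
                congr 1; exact Fin.ext (show j + 1 = k (i + 1) by omega)
              omega
            · -- both plain (past the block)
              by_cases c6 : j + 1 < k (i + 1)
              · omega
              · rw [if_neg c2, if_neg c6, if_neg c5, if_neg c1, if_neg c3, if_neg c4]
                exact hbmono (show (⟨j, hj1⟩ : Fin m) < ⟨j + 1, hj2⟩ by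
                  simp only [Fin.lt_def]; omega)
  -- the key fact: δ does not dominate τ = φ(σ)
  have hkey : ¬ deltaLE (phiT m n σ) δ := by
    apply key_not_deltaLE δ ⟨hr1, hrmn, hc, hd, hcb, hdb⟩ σ hσmono hσub
    · intro j; rw [← hbdef]; exact hσge j
    · obtain ⟨j, hj⟩ := hσne
      exact ⟨j, by rw [← hbdef]; exact hj⟩
  -- now produce N by minimality
  set τ : DeltaTuple := phiT m n σ with hτdef
  have hex : ∃ s, ∃ hs : s ≤ δ.1, ¬ deltaLE τ
      ⟨s, fun j => δ.2.1 (Fin.castLE hs j), fun j => δ.2.2 (Fin.castLE hs j)⟩ :=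
    ⟨δ.1, le_rfl, hkey⟩
  set N : ℕ := Nat.find hex with hNdef
  obtain ⟨hNr, hNnot⟩ := Nat.find_spec hex
  have hN1 : 1 ≤ N := by
    by_contra hN0'
    have hN0 : N = 0 := by omega
    exact hNnot ⟨hN0.le.trans (Nat.zero_le _), fun p =>
      absurd (lt_of_lt_of_le p.isLt (le_of_eq hN0)) (Nat.not_lt_zero _)⟩
  refine ⟨N, hN1, hNr, ?_, ?_⟩
  · -- minimality for arbitrary θ
    rintro θ hθ ⟨hc1, hcomp1⟩ hτθ
    by_contra hlt
    refine Nat.find_min hex (show θ.1 < N by omega) ⟨hc1, fun hcon => ?_⟩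
    obtain ⟨h1, h2⟩ := hcon
    exact hτθ ⟨h1, fun p =>
      ⟨le_trans (h2 p).1 (hcomp1 p).1, le_trans (h2 p).2 (hcomp1 p).2⟩⟩
  · -- truncations between N and r
    intro s hNs hs
    constructor
    · exact ⟨hs, fun p => ⟨le_rfl, le_rfl⟩⟩
    · rintro ⟨h1, h2⟩
      exact hNnot ⟨le_trans hNs h1, fun p => h2 (Fin.castLE hNs p)⟩
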